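/- Fix a finite multiset M of positive integers with |M| ≥ 2. There exists an involution Ψ on 𝒯_M such that for every T ∈ 𝒯_M: snuleaf(Ψ(T)) = snuleaf(T), etleaf(Ψ(T)) = etleaf(T), syleaf(Ψ(T)) = syleaf(T), yerleaf(Ψ(T)) = yerleaf(T), yint(Ψ(T)) = yint(T), and suleaf(Ψ(T)) = entleaf(T) (hence also entleaf(Ψ(T)) = suleaf(T)). In particular, Ψ restricts to an involution on 𝒜_M = {T ∈ 𝒯_M : yint(T) = 0}. -/

import Mathlib

/-- Labeled plane trees: a node with a label in `ℕ` and a (left-to-right ordered)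
list of children. -/
inductive LTree : Type where
  | node : ℕ → List LTree → LTree

namespace LTree

/-- The label of the root. -/
def label : LTree → ℕ
  | node a _ => a

/-- The list of children of the root, from left to right. -/
def children : LTree → List LTree
  | node _ cs => cs

/-- A tree consisting of a single node is a leaf. -/
def isLeaf (t : LTree) : Bool := t.children.isEmpty

/-- The list of all subtrees (i.e. all nodes) of a tree. -/
def subtrees : LTree → List LTree
  | node a cs => node a cs :: (cs.attach.map (fun c => subtrees c.1)).flatten
decreasing_by
  simp only [LTree.node.sizeOf_spec]
  have := List.sizeOf_lt_of_mem c.2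
  omega

/-- The multiset of labels of all nodes of a tree. -/
def labels (T : LTree) : Multiset ℕ := (T.subtrees.map label : List ℕ)

/-- `T` is a weakly increasing tree on the multiset `M`: the root is labeled `0`,
the multiset of labels is `M ∪ {0}`, labels weakly increase along root-to-leaf paths,
and the labels of the children of each node weakly increase from right to left. -/
def IsWIT (M : Multiset ℕ) (T : LTree) : Prop :=
  T.label = 0 ∧ T.labels = 0 ::ₘ M ∧
  ∀ t ∈ T.subtrees, (∀ c ∈ t.children, t.label ≤ c.label) ∧
    List.Chain' (fun a b => b ≤ a) (t.children.map label)

/-- `T` is (an encoding of) a plane tree with `n` edges: all labels are zero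
and there are `n + 1` nodes. -/
def IsPlane (n : ℕ) (T : LTree) : Prop :=
  (∀ t ∈ T.subtrees, t.label = 0) ∧ T.subtrees.length = n + 1

/-- The number of singleton leaves: leaves that are the only child of their parent. -/
def sleaf (T : LTree) : ℕ :=
  T.subtrees.countP (fun t => match t.children with
    | [c] => c.isLeaf
    | _ => false)

/-- The number of elder leaves: leaves that are the leftmost child of their parent
and have siblings. -/
def eleaf (T : LTree) : ℕ :=
  T.subtrees.countP (fun t => match t.children with
    | c :: _ :: _ => c.isLeaf
    | _ => false)

/-- The number of young leaves: leaves that are not the leftmost child of their parent. -/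
def yleaf (T : LTree) : ℕ :=
  (T.subtrees.map (fun t => t.children.tail.countP isLeaf)).sum

/-- The number of young internal nodes: internal nodes whose leftmost child is internal. -/
def yint (T : LTree) : ℕ :=
  T.subtrees.countP (fun t => match t.children with
    | c :: _ => !c.isLeaf
    | _ => false)

/-- The number of singleton internal nodes: parents of a singleton leaf. -/
def sint (T : LTree) : ℕ :=
  T.subtrees.countP (fun t => match t.children with
    | [c] => c.isLeaf
    | _ => false)

/-- The number of elder internal nodes: parents of an elder leaf. -/
def eint (T : LTree) : ℕ :=
  T.subtrees.countP (fun t => match t.children with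
    | c :: _ :: _ => c.isLeaf
    | _ => false)

/-- The number of old leaves: leaves that are the leftmost child of their parent. -/
def oleaf (T : LTree) : ℕ := sleaf T + eleaf T

/-- The number of old internal nodes. -/
def oint (T : LTree) : ℕ := sint T + eint T

/-- Whether the root of `t` is the parent of a singleton leaf. -/
def isSingletonParent (t : LTree) : Bool :=
  match t.children with
  | [c] => c.isLeaf
  | _ => false

/-- The number of singleton leaves with uncle: singleton leaves whose parent has an
elder sibling (a sibling to its left). -/
def suleaf (T : LTree) : ℕ :=
  (T.subtrees.map (fun g => g.children.tail.countP isSingletonParent)).sum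

/-- The number of singleton leaves with no uncle: singleton leaves whose parent has no
elder sibling (the parent is the root or a leftmost child). -/
def snuleaf (T : LTree) : ℕ :=
  (if T.isSingletonParent then 1 else 0) +
    (T.subtrees.map (fun g => match g.children with
      | c :: _ => if c.isSingletonParent then 1 else 0
      | [] => 0)).sum

/-- The number of elder twin leaves: elder leaves such that the second child of their
parent is also a leaf. -/
def etleaf (T : LTree) : ℕ :=
  T.subtrees.countP (fun t => match t.children with
    | c :: d :: _ => c.isLeaf && d.isLeaf
    | _ => false)

/-- The number of elder non-twin leaves: elder leaves such that the second child of
their parent is not a leaf. -/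
def entleaf (T : LTree) : ℕ :=
  T.subtrees.countP (fun t => match t.children with
    | c :: d :: _ => c.isLeaf && !d.isLeaf
    | _ => false)

/-- The number of second leaves: young leaves that are the second child of their parent. -/
def syleaf (T : LTree) : ℕ :=
  T.subtrees.countP (fun t => match t.children with
    | _ :: d :: _ => d.isLeaf
    | _ => false)

/-- The number of younger leaves: young leaves that are not the second child of their
parent. -/
def yerleaf (T : LTree) : ℕ :=
  (T.subtrees.map (fun t => (t.children.drop 2).countP isLeaf)).sum

end LTree

namespace PsiAux
open LTree

instance : Inhabited LTree := ⟨.node 0 []⟩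

/-- find the last singleton-parent in a list, splitting around it -/
def splitR : List LTree → Option (List LTree × LTree × List LTree)
  | [] => none
  | x :: xs =>
    match splitR xs with
    | some (P, p, R) => some (x :: P, p, R)
    | none => if x.isSingletonParent then some ([], x, xs) else none

theorem splitR_none {l : List LTree} (h : splitR l = none) :
    ∀ x ∈ l, x.isSingletonParent = false := by
  induction l with
  | nil => simp
  | cons a l ih =>
    intro x hx
    rw [splitR] at h
    rcases hsl : splitR l with _ | ⟨⟨P, p, R⟩⟩
    · rw [hsl] at h
      simp only at h
      split_ifs at h with hsp
      rcases List.mem_cons.mp hx with rfl | hx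
      · simpa using hsp
      · exact ih hsl x hx
    · rw [hsl] at h; simp at h

theorem splitR_some {l P p R} (h : splitR l = some (P, p, R)) :
    l = P ++ p :: R ∧ p.isSingletonParent = true ∧ ∀ x ∈ R, x.isSingletonParent = false := by
  induction l generalizing P with
  | nil => simp [splitR] at h
  | cons a l ih =>
    rw [splitR] at h
    rcases hsl : splitR l with _ | ⟨⟨P', p', R'⟩⟩ <;> rw [hsl] at h
    · simp only at h
      split_ifs at h with hsp
      · obtain ⟨rfl, rfl, rfl⟩ : P = [] ∧ p = a ∧ R = l := by
          injection h with h'; injection h' with h1 h2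
          injection h2 with h3 h4
          exact ⟨h1.symm, h3.symm, h4.symm⟩
        exact ⟨rfl, hsp, splitR_none hsl⟩
    · simp only at h
      obtain ⟨rfl, rfl, rfl⟩ : P = a :: P' ∧ p = p' ∧ R = R' := by
        injection h with h'; injection h' with h1 h2
        injection h2 with h3 h4
        exact ⟨h1.symm, h3.symm, h4.symm⟩
      obtain ⟨h1, h2, h3⟩ := ih hsl
      exact ⟨by rw [h1]; rfl, h2, h3⟩

theorem splitR_eq {P R : List LTree} {p : LTree} (hp : p.isSingletonParent = true)
    (hR : ∀ x ∈ R, x.isSingletonParent = false) :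
    splitR (P ++ p :: R) = some (P, p, R) := by
  induction P with
  | nil =>
    have hnone : splitR R = none := by
      rcases h : splitR R with _ | ⟨⟨P', p', R'⟩⟩
      · rfl
      · obtain ⟨h1, h2, _⟩ := splitR_some h
        have := hR p' (by rw [h1]; simp)
        rw [this] at h2; cases h2
    simp [splitR, hnone, hp]
  | cons a P ih => simp [splitR, ih]

end PsiAux

section SizeLemmas
open LTree

theorem sizeOf_list_pos (l : List LTree) : 1 ≤ sizeOf l := by
  cases l <;> (simp only [List.nil.sizeOf_spec, List.cons.sizeOf_spec]; omega)

theorem sizeOf_tree_pos (t : LTree) : 2 ≤ sizeOf t := by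
  cases t with
  | node a cs =>
    have := sizeOf_list_pos cs
    simp only [LTree.node.sizeOf_spec]
    omega

theorem sizeOf_append_tree (l1 l2 : List LTree) :
    sizeOf (l1 ++ l2) + 1 = sizeOf l1 + sizeOf l2 := by
  induction l1 with
  | nil => simp only [List.nil_append, List.nil.sizeOf_spec]; omega
  | cons a l ih =>
    simp only [List.cons_append, List.cons.sizeOf_spec]
    omega

theorem sizeOf_children_lt (t : LTree) : sizeOf t.children < sizeOf t := by
  cases t with
  | node a cs =>
    show sizeOf cs < sizeOf (LTree.node a cs)
    simp only [LTree.node.sizeOf_spec]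
    omega

theorem sizeOf_children_le_of_mem {t : LTree} {l : List LTree} (h : t ∈ l) :
    sizeOf t.children + 1 ≤ sizeOf l := by
  have h1 := List.sizeOf_lt_of_mem h
  have h2 := sizeOf_children_lt t
  omega

end SizeLemmas

namespace PsiAux2
open LTree PsiAux

def chiF : ℕ → List LTree → List LTree
  | 0, cs => cs
  | n+1, cs =>
    match cs with
    | [] => []
    | c0 :: rest =>
    match splitR rest with
    | some (P, p, R) =>
        p.children.headI :: node p.label (chiF n (c0 :: P)) ::
          R.map (fun r => node r.label (chiF n r.children))
    | none =>
      match rest with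
      | [] => [node c0.label (chiF n c0.children)]
      | d :: rest' =>
        if c0.isLeaf && !d.isLeaf then
          chiF n d.children ++ node d.label [c0] ::
            rest'.map (fun r => node r.label (chiF n r.children))
        else (c0 :: rest).map (fun r => node r.label (chiF n r.children))

theorem splitR_nil : splitR ([] : List LTree) = none := rfl

theorem chiF_stable : ∀ n m : ℕ, ∀ cs : List LTree,
    sizeOf cs ≤ n → sizeOf cs ≤ m → chiF n cs = chiF m cs := by
  intro n
  induction n using Nat.strong_induction_on with
  | _ n ih =>
  intro m cs hn hm
  have h1 := sizeOf_list_pos cs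
  obtain ⟨n, rfl⟩ : ∃ k, n = k + 1 := ⟨n - 1, by omega⟩
  obtain ⟨m, rfl⟩ : ∃ k, m = k + 1 := ⟨m - 1, by omega⟩
  have ih : ∀ (cs : List LTree), sizeOf cs ≤ n → sizeOf cs ≤ m →
      chiF n cs = chiF m cs := fun cs h1 h2 => ih n (by omega) m cs h1 h2
  match cs with
  | [] => rfl
  | c0 :: rest =>
    have hsz : sizeOf (c0 :: rest) = 1 + sizeOf c0 + sizeOf rest := by simp
    have hc0 := sizeOf_children_lt c0
    have hc0' := sizeOf_tree_pos c0
    have hrest := sizeOf_list_pos rest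
    rcases hs : splitR rest with _ | ⟨⟨P, p, R⟩⟩
    · match rest with
      | [] =>
        rw [chiF.eq_3, chiF.eq_3]
        simp only [splitR_nil]
        rw [ih c0.children (by omega) (by omega)]
      | d :: rest' =>
        have hdr : sizeOf (d :: rest') = 1 + sizeOf d + sizeOf rest' := by simp
        have hd := sizeOf_children_lt d
        have hmap : rest'.map (fun r => node r.label (chiF n r.children)) =
            rest'.map (fun r => node r.label (chiF m r.children)) := by
          apply List.map_congr_left
          intro r hr
          have h2 := sizeOf_children_le_of_mem hr
          rw [ih r.children (by omega) (by omega)]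
        rw [chiF.eq_4, chiF.eq_4]
        simp only [hs]
        by_cases hb : (c0.isLeaf && !d.isLeaf) = true
        · simp only [hb, if_true]
          rw [ih d.children (by omega) (by omega), hmap]
        · simp only [hb, if_false]
          simp only [List.map_cons]
          rw [ih c0.children (by omega) (by omega), ih d.children (by omega) (by omega), hmap]
    · obtain ⟨hr1, _, _⟩ := splitR_some hs
      have hsztail : sizeOf rest + 1 = sizeOf P + (1 + sizeOf p + sizeOf R) := by
        have h' := sizeOf_append_tree P (p :: R)
        rw [hr1]
        simp only [List.cons.sizeOf_spec] at h' ⊢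
        omega
      have hp2 := sizeOf_tree_pos p
      have hPsz : sizeOf (c0 :: P) = 1 + sizeOf c0 + sizeOf P := by simp
      have hR := sizeOf_list_pos R
      have hP := sizeOf_list_pos P
      have hmap : R.map (fun r => node r.label (chiF n r.children)) =
          R.map (fun r => node r.label (chiF m r.children)) := by
        apply List.map_congr_left
        intro r hr
        have h2 := sizeOf_children_le_of_mem hr
        rw [ih r.children (by omega) (by omega)]
      rw [chiF.eq_def (n+1) (c0 :: rest), chiF.eq_def (m+1) (c0 :: rest)]
      simp only [hs]
      rw [ih (c0 :: P) (by omega) (by omega), hmap]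

noncomputable def chi (cs : List LTree) : List LTree := chiF (sizeOf cs) cs

noncomputable def Phi (t : LTree) : LTree := node t.label (chi t.children)

theorem chiF_eq_chi {n : ℕ} {cs : List LTree} (h : sizeOf cs ≤ n) : chiF n cs = chi cs :=
  chiF_stable n (sizeOf cs) cs h le_rfl

theorem chi_nil : chi [] = [] := rfl

theorem map_chiF_eq_map_Phi {n : ℕ} {l : List LTree} (h : sizeOf l ≤ n + 1) :
    l.map (fun r => node r.label (chiF n r.children)) = l.map Phi := by
  apply List.map_congr_left
  intro r hr
  have := sizeOf_children_le_of_mem hr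
  rw [chiF_eq_chi (by omega)]; rfl

theorem chi_single (t : LTree) : chi [t] = [Phi t] := by
  have h1 := sizeOf_tree_pos t
  have hc := sizeOf_children_lt t
  show chiF (sizeOf [t]) [t] = _
  have h2 : sizeOf [t] = 1 + sizeOf t + 1 := by simp
  rw [show sizeOf [t] = (sizeOf [t] - 1) + 1 by omega]
  rw [chiF.eq_3]
  simp only [splitR_nil]
  rw [chiF_eq_chi (by omega)]
  rfl

theorem chi_cons_some {c0 p : LTree} {rest P R : List LTree}
    (h : splitR rest = some (P, p, R)) :
    chi (c0 :: rest) = p.children.headI :: node p.label (chi (c0 :: P)) :: R.map Phi := by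
  obtain ⟨hr1, _, _⟩ := splitR_some h
  have hp2 := sizeOf_tree_pos p
  have hsztail : sizeOf rest + 1 = sizeOf P + (1 + sizeOf p + sizeOf R) := by
    have h' := sizeOf_append_tree P (p :: R)
    rw [hr1]
    simp only [List.cons.sizeOf_spec] at h' ⊢
    omega
  have h0 : sizeOf (c0 :: rest) = 1 + sizeOf c0 + sizeOf rest := by simp
  have hPsz : sizeOf (c0 :: P) = 1 + sizeOf c0 + sizeOf P := by simp
  have h2 := sizeOf_list_pos R
  have h3 := sizeOf_list_pos P
  have h4 := sizeOf_tree_pos c0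
  show chiF (sizeOf (c0 :: rest)) (c0 :: rest) = _
  rw [show sizeOf (c0 :: rest) = (sizeOf (c0 :: rest) - 1) + 1 by omega]
  rw [chiF.eq_def]
  simp only [h]
  rw [chiF_eq_chi (by omega), map_chiF_eq_map_Phi (by omega)]

theorem chi_cons_none_A {c0 d : LTree} {rest' : List LTree}
    (h : splitR (d :: rest') = none) (h2 : (c0.isLeaf && !d.isLeaf) = true) :
    chi (c0 :: d :: rest') = chi d.children ++ node d.label [c0] :: rest'.map Phi := by
  have hd : sizeOf d.children < sizeOf d := sizeOf_children_lt d
  have h0 : sizeOf (c0 :: d :: rest') = 1 + sizeOf c0 + (1 + sizeOf d + sizeOf rest') := by simp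
  have h4 := sizeOf_tree_pos c0
  have h5 := sizeOf_list_pos rest'
  show chiF (sizeOf (c0 :: d :: rest')) (c0 :: d :: rest') = _
  rw [show sizeOf (c0 :: d :: rest') = (sizeOf (c0 :: d :: rest') - 1) + 1 by omega]
  rw [chiF.eq_4]
  simp only [h, h2, if_true]
  rw [chiF_eq_chi (by omega), map_chiF_eq_map_Phi (by omega)]

theorem chi_cons_none_N {c0 : LTree} {rest : List LTree}
    (h : splitR rest = none)
    (h2 : ∀ d ∈ rest.head?, (c0.isLeaf && !d.isLeaf) = false) :
    chi (c0 :: rest) = (c0 :: rest).map Phi := by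
  have h4 := sizeOf_tree_pos c0
  have hc := sizeOf_children_lt c0
  have h0 : sizeOf (c0 :: rest) = 1 + sizeOf c0 + sizeOf rest := by simp
  have h5 := sizeOf_list_pos rest
  show chiF (sizeOf (c0 :: rest)) (c0 :: rest) = _
  rw [show sizeOf (c0 :: rest) = (sizeOf (c0 :: rest) - 1) + 1 by omega]
  match rest with
  | [] =>
    rw [chiF.eq_3]
    simp only [splitR_nil]
    rw [chiF_eq_chi (by omega)]
    rfl
  | d :: rest' =>
    have h3 := h2 d (by simp)
    have hdr : sizeOf (d :: rest') = 1 + sizeOf d + sizeOf rest' := by simp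
    rw [chiF.eq_4]
    simp only [h, h3, if_false, Bool.false_eq_true]
    rw [map_chiF_eq_map_Phi (by omega)]

end PsiAux2
namespace PsiAux3
open LTree PsiAux PsiAux2

theorem sp_iff {t : LTree} :
    t.isSingletonParent = true ↔ ∃ b ℓ, t = node b [ℓ] ∧ ℓ.isLeaf = true := by
  constructor
  · intro h
    cases t with
    | node b cs =>
      match cs with
      | [] => simp [isSingletonParent, children] at h
      | [ℓ] => exact ⟨b, ℓ, rfl, h⟩
      | x :: y :: l => simp [isSingletonParent, children] at h
  · rintro ⟨b, ℓ, rfl, h⟩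
    simpa [isSingletonParent, children] using h

theorem isLeaf_node {a : ℕ} {cs : List LTree} : (node a cs).isLeaf = cs.isEmpty := rfl

theorem children_node {a : ℕ} {cs : List LTree} : (node a cs).children = cs := rfl

theorem label_node {a : ℕ} {cs : List LTree} : (node a cs).label = a := rfl

theorem label_Phi (t : LTree) : (Phi t).label = t.label := rfl

theorem children_Phi (t : LTree) : (Phi t).children = chi t.children := rfl

/-- Case analysis principle for `chi` on a list with at least one element. -/
theorem chi_cases {motive : Prop} (c0 : LTree) (rest : List LTree)
    (hB : ∀ (P R : List LTree) (b : ℕ) (ℓ : LTree),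
      rest = P ++ (node b [ℓ]) :: R → ℓ.isLeaf = true →
      (∀ x ∈ R, x.isSingletonParent = false) →
      chi (c0 :: rest) = ℓ :: node b (chi (c0 :: P)) :: R.map Phi → motive)
    (hA : ∀ (b : ℕ) (es rest' : List LTree),
      rest = (node b es) :: rest' → c0.isLeaf = true → es ≠ [] →
      (∀ x ∈ rest, x.isSingletonParent = false) →
      chi (c0 :: rest) = chi es ++ node b [c0] :: rest'.map Phi → motive)
    (hN : (∀ x ∈ rest, x.isSingletonParent = false) →
      (∀ d ∈ rest.head?, (c0.isLeaf && !d.isLeaf) = false) →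
      chi (c0 :: rest) = (c0 :: rest).map Phi → motive) : motive := by
  rcases hs : splitR rest with _ | ⟨⟨P, p, R⟩⟩
  · have hnone := splitR_none hs
    match rest with
    | [] =>
      apply hN hnone (by simp)
      rw [show (c0 :: ([] : List LTree)) = [c0] from rfl, chi_single]
      rfl
    | d :: rest' =>
      by_cases hb : (c0.isLeaf && !d.isLeaf) = true
      · cases d with
        | node b es =>
          have hes : es ≠ [] := by
            intro h
            subst h
            simp [isLeaf_node, List.isEmpty] at hb
          exact hA b es rest' rfl (by simpa using hb.symm ▸ (Bool.and_elim_left hb)) hes hnone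
            (chi_cons_none_A hs hb)
      · apply hN hnone
        · intro x hx
          simp only [List.head?] at hx
          cases hx
          simpa using hb
        · exact chi_cons_none_N hs (by intro x hx; simp only [List.head?] at hx; cases hx; simpa using hb)
  · obtain ⟨hr1, hsp, hR⟩ := splitR_some hs
    obtain ⟨b, ℓ, rfl, hl⟩ := sp_iff.mp hsp
    apply hB P R b ℓ hr1 hl hR
    rw [chi_cons_some hs]
    rfl

theorem chi_ne_nil {cs : List LTree} (h : cs ≠ []) : chi cs ≠ [] := by
  match cs with
  | c0 :: rest =>
    apply chi_cases c0 rest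
    · intro P R b ℓ _ _ _ hc
      rw [hc]; simp
    · intro b es rest' _ _ _ _ hc
      rw [hc]; simp
    · intro _ _ hc
      rw [hc]; simp

theorem chi_length_eq_one {cs : List LTree} (h : cs.length = 1) :
    ∃ t, cs = [t] ∧ chi cs = [Phi t] := by
  match cs with
  | [t] => exact ⟨t, rfl, chi_single t⟩

theorem chi_length_two {cs : List LTree} (h : 2 ≤ cs.length) : 2 ≤ (chi cs).length := by
  match cs with
  | c0 :: rest =>
    apply chi_cases c0 rest
    · intro P R b ℓ _ _ _ hc
      rw [hc]; simp
    · intro b es rest' h1 _ hes _ hc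
      rw [hc]
      have := chi_ne_nil hes
      have : 1 ≤ (chi es).length := by
        cases hch : chi es
        · exact absurd hch this
        · simp
      simp only [List.length_append, List.length_cons]
      omega
    · intro _ _ hc
      rw [hc]
      simpa using h

theorem isLeaf_Phi (t : LTree) : (Phi t).isLeaf = t.isLeaf := by
  cases t with
  | node a cs =>
    show (node a (chi cs)).isLeaf = _
    rw [isLeaf_node, isLeaf_node]
    cases hcs : cs with
    | nil => rw [chi_nil]
    | cons x l =>
      have := chi_ne_nil (cs := x :: l) (by simp)
      cases h2 : chi (x :: l)
      · exact absurd h2 this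
      · simp

theorem sp_Phi (t : LTree) : (Phi t).isSingletonParent = t.isSingletonParent := by
  cases t with
  | node a cs =>
    show (node a (chi cs)).isSingletonParent = _
    match cs with
    | [] => rw [chi_nil]
    | [x] =>
      rw [chi_single]
      show (node a [Phi x]).isSingletonParent = (node a [x]).isSingletonParent
      simp [isSingletonParent, children, isLeaf_Phi]
    | x :: y :: l =>
      have h2 := chi_length_two (cs := x :: y :: l) (by simp)
      obtain ⟨u, v, w, hc⟩ : ∃ u v w, chi (x :: y :: l) = u :: v :: w := by
        match hc : chi (x :: y :: l) with
        | [] => rw [hc] at h2; simp at h2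
        | [u] => rw [hc] at h2; simp at h2
        | u :: v :: w => exact ⟨u, v, w, rfl⟩
      rw [hc]
      rfl

theorem countP_sp_map_Phi (l : List LTree) :
    (l.map Phi).countP isSingletonParent = l.countP isSingletonParent := by
  rw [List.countP_map]
  apply List.countP_congr
  intro x _
  simp [Function.comp, sp_Phi]

theorem countP_lf_map_Phi (l : List LTree) :
    (l.map Phi).countP isLeaf = l.countP isLeaf := by
  rw [List.countP_map]
  apply List.countP_congr
  intro x _
  simp [Function.comp, isLeaf_Phi]

theorem countP_lf_comp (l : List LTree) :
    l.countP (isLeaf ∘ Phi) = l.countP isLeaf := by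
  apply List.countP_congr
  intro x _
  simp [Function.comp, isLeaf_Phi]

theorem countP_sp_comp (l : List LTree) :
    l.countP (isSingletonParent ∘ Phi) = l.countP isSingletonParent := by
  apply List.countP_congr
  intro x _
  simp [Function.comp, sp_Phi]

theorem map_Phi_Phi_of (l : List LTree) (h : ∀ x ∈ l, Phi (Phi x) = x) :
    (l.map Phi).map Phi = l := by
  rw [List.map_map]
  exact List.map_congr_left (by simpa [Function.comp] using h) |>.trans (List.map_id l)

end PsiAux3
namespace PsiAux4
open LTree PsiAux PsiAux2 PsiAux3

theorem Phi_node (a : ℕ) (cs : List LTree) : Phi (node a cs) = node a (chi cs) := rfl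

theorem Phi_leaf {t : LTree} (h : t.isLeaf = true) : Phi t = t := by
  cases t with
  | node a cs =>
    cases cs with
    | nil => rw [Phi_node, chi_nil]
    | cons x l => simp [isLeaf_node, List.isEmpty] at h

theorem splitR_eq_none {l : List LTree} (h : ∀ x ∈ l, x.isSingletonParent = false) :
    splitR l = none := by
  rcases hs : splitR l with _ | ⟨⟨P, p, R⟩⟩
  · rfl
  · obtain ⟨h1, h2, _⟩ := splitR_some hs
    have := h p (by rw [h1]; simp)
    rw [this] at h2
    cases h2

theorem sp_node_single {b : ℕ} {x : LTree} :
    (node b [x]).isSingletonParent = x.isLeaf := rfl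

theorem not_sp_node {b : ℕ} {l : List LTree} (h : 2 ≤ l.length) :
    (node b l).isSingletonParent = false := by
  match l with
  | x :: y :: l => rfl

theorem not_lf_node {b : ℕ} {l : List LTree} (h : l ≠ []) :
    (node b l).isLeaf = false := by
  match l with
  | x :: l => rfl

theorem sp_map_Phi {l : List LTree} (h : ∀ x ∈ l, x.isSingletonParent = false) :
    ∀ x ∈ l.map Phi, x.isSingletonParent = false := by
  intro x hx
  obtain ⟨y, hy, rfl⟩ := List.mem_map.mp hx
  rw [sp_Phi]
  exact h y hy

theorem chi_chi : ∀ n : ℕ, ∀ cs : List LTree, sizeOf cs ≤ n → chi (chi cs) = cs := by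
  intro n
  induction n using Nat.strong_induction_on with
  | _ n ih =>
  intro cs hn
  have hPhiPhi : ∀ x : LTree, sizeOf x ≤ n → Phi (Phi x) = x := by
    intro x hx
    cases x with
    | node a cs' =>
      have h1 : sizeOf cs' < sizeOf (node a cs') := by
        have := sizeOf_children_lt (node a cs'); exact this
      rw [Phi_node, Phi_node, ih (sizeOf cs') (by omega) cs' le_rfl]
  have hmapPhiPhi : ∀ l : List LTree, sizeOf l ≤ n → (l.map Phi).map Phi = l := by
    intro l hl
    apply map_Phi_Phi_of
    intro x hx
    have := List.sizeOf_lt_of_mem hx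
    exact hPhiPhi x (by omega)
  match cs with
  | [] => rw [chi_nil, chi_nil]
  | c0 :: rest =>
    have hsz : sizeOf (c0 :: rest) = 1 + sizeOf c0 + sizeOf rest := by simp
    have hc0 := sizeOf_tree_pos c0
    have hrest := sizeOf_list_pos rest
    apply chi_cases c0 rest
    · -- B case
      intro P R b ℓ hr1 hl hR hc
      have hszr : sizeOf rest + 1 = sizeOf P + (1 + sizeOf (node b [ℓ]) + sizeOf R) := by
        have h' := sizeOf_append_tree P (node b [ℓ] :: R)
        rw [hr1]
        simp only [List.cons.sizeOf_spec] at h' ⊢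
        omega
      have hp2 := sizeOf_tree_pos (node b [ℓ])
      have hP := sizeOf_list_pos P
      have hr := sizeOf_list_pos R
      rw [hc]
      have hRR : ∀ x ∈ R.map Phi, x.isSingletonParent = false := sp_map_Phi hR
      have e0 : sizeOf ([] : List LTree) = 1 := rfl
      cases P with
      | nil =>
        have e3 : sizeOf [c0] = 1 + sizeOf c0 + 1 := by simp
        rw [chi_single] at hc ⊢
        by_cases hcl : c0.isLeaf = true
        · -- coincidence: q is a singleton parent
          have hq : (node b [Phi c0]).isSingletonParent = true := by
            rw [sp_node_single, isLeaf_Phi]; exact hcl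
          have hsplit : splitR (node b [Phi c0] :: R.map Phi) =
              some ([], node b [Phi c0], R.map Phi) := splitR_eq (P := []) hq hRR
          rw [chi_cons_some hsplit]
          show Phi c0 :: node b (chi [ℓ]) :: (R.map Phi).map Phi = _
          rw [chi_single, Phi_leaf hcl, Phi_leaf hl,
            hmapPhiPhi R (by omega), hr1]
          rfl
        · -- q not sp : A-branch applies to the image
          have hcl' : c0.isLeaf = false := by simpa using hcl
          have hq : (node b [Phi c0]).isSingletonParent = false := by
            rw [sp_node_single, isLeaf_Phi]; exact hcl'
          have hsplit : splitR (node b [Phi c0] :: R.map Phi) = none := by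
            apply splitR_eq_none
            intro x hx
            rcases List.mem_cons.mp hx with rfl | hx
            · exact hq
            · exact hRR x hx
          have hA := chi_cons_none_A (c0 := ℓ) hsplit
            (by rw [hl, not_lf_node (by simp)]; rfl)
          rw [hA]
          show chi [Phi c0] ++ node b [ℓ] :: (R.map Phi).map Phi = _
          rw [← chi_single, ih (sizeOf [c0]) (by omega) [c0] le_rfl,
            hmapPhiPhi R (by omega), hr1]
          rfl
      | cons c1 P' =>
        have e1 : sizeOf (c1 :: P') = 1 + sizeOf c1 + sizeOf P' := by simp
        have e2 : sizeOf (c0 :: c1 :: P') = 1 + sizeOf c0 + (1 + sizeOf c1 + sizeOf P') := by simp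
        have ec1 := sizeOf_tree_pos c1
        have eP' := sizeOf_list_pos P'
        have hlen : 2 ≤ (chi (c0 :: c1 :: P')).length := chi_length_two (by simp)
        have hq : (node b (chi (c0 :: c1 :: P'))).isSingletonParent = false := not_sp_node hlen
        have hqlf : (node b (chi (c0 :: c1 :: P'))).isLeaf = false :=
          not_lf_node (by intro h; rw [h] at hlen; simp at hlen)
        have hsplit : splitR (node b (chi (c0 :: c1 :: P')) :: R.map Phi) = none := by
          apply splitR_eq_none
          intro x hx
          rcases List.mem_cons.mp hx with rfl | hx
          · exact hq
          · exact hRR x hx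
        have hA := chi_cons_none_A (c0 := ℓ) hsplit (by rw [hl, hqlf]; rfl)
        rw [hA]
        show chi (chi (c0 :: c1 :: P')) ++ node b [ℓ] :: (R.map Phi).map Phi = _
        have hPsz : sizeOf (c0 :: c1 :: P') ≤ n := by
          simp only [List.cons.sizeOf_spec] at hszr hn ⊢
          omega
        rw [ih (sizeOf (c0 :: c1 :: P')) (by omega) _ le_rfl, hmapPhiPhi R (by omega), hr1]
        rfl
    · -- A case
      intro b es rest' hr1 hcl hes hsp hc
      rw [hc]
      obtain ⟨e0, E, hchi⟩ : ∃ e0 E, chi es = e0 :: E := by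
        cases hch : chi es
        · exact absurd hch (chi_ne_nil hes)
        · exact ⟨_, _, rfl⟩
      have hszr : sizeOf rest = 1 + (1 + b + sizeOf es) + sizeOf rest' := by
        rw [hr1]; simp
      have hsprest' : ∀ x ∈ rest'.map Phi, x.isSingletonParent = false := by
        apply sp_map_Phi
        intro x hx
        exact hsp x (by rw [hr1]; exact List.mem_cons_of_mem _ hx)
      have hsplit : splitR (E ++ node b [c0] :: rest'.map Phi) =
          some (E, node b [c0], rest'.map Phi) :=
        splitR_eq (by rw [sp_node_single]; exact hcl) hsprest'
      rw [hchi]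
      show chi (e0 :: (E ++ node b [c0] :: rest'.map Phi)) = _
      rw [chi_cons_some hsplit]
      show c0 :: node b (chi (e0 :: E)) :: (rest'.map Phi).map Phi = _
      rw [← hchi, ih (sizeOf es) (by have := sizeOf_list_pos es; omega) es le_rfl,
        hmapPhiPhi rest' (by omega), hr1]
    · -- N case
      intro hsp hhd hc
      rw [hc]
      show chi (Phi c0 :: rest.map Phi) = _
      have hsplit : splitR (rest.map Phi) = none := splitR_eq_none (sp_map_Phi hsp)
      rw [chi_cons_none_N hsplit ?_]
      · show (Phi c0 :: rest.map Phi).map Phi = _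
        simp only [List.map_cons]
        rw [hPhiPhi c0 (by omega), hmapPhiPhi rest (by omega)]
      · intro d hd
        match rest with
        | [] => simp at hd
        | r0 :: rest' =>
          simp only [List.map_cons, List.head?] at hd
          cases hd
          rw [isLeaf_Phi, isLeaf_Phi]
          exact hhd r0 (by simp [List.head?])

theorem Phi_Phi (t : LTree) : Phi (Phi t) = t := by
  cases t with
  | node a cs =>
    rw [Phi_node, Phi_node, chi_chi (sizeOf cs) cs le_rfl]

end PsiAux4
namespace PsiAux5
open LTree PsiAux PsiAux2 PsiAux3 PsiAux4

theorem subtrees_node (a : ℕ) (cs : List LTree) :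
    subtrees (node a cs) = node a cs :: (cs.map subtrees).flatten := by
  rw [subtrees]
  congr 1
  congr 1
  exact List.map_congr_left (fun c _ => rfl) |>.symm ▸ (by
    rw [List.attach_map_val] <;> rfl)

/-- Sum of a local statistic over all subtrees. -/
def SForm (loc : List LTree → ℕ) (t : LTree) : ℕ :=
  ((subtrees t).map (fun s => loc s.children)).sum

theorem sum_map_flatten (L : List (List LTree)) (g : LTree → ℕ) :
    (L.flatten.map g).sum = (L.map (fun l => (l.map g).sum)).sum := by
  induction L with
  | nil => rfl
  | cons l L ih => simp [ih, Function.comp_def]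

theorem SForm_node (loc : List LTree → ℕ) (a : ℕ) (cs : List LTree) :
    SForm loc (node a cs) = loc cs + (cs.map (SForm loc)).sum := by
  rw [SForm, subtrees_node]
  simp only [List.map_cons, List.sum_cons, children_node]
  congr 1
  rw [sum_map_flatten]
  congr 1
  rw [List.map_map]
  rfl

theorem SForm_eq (loc : List LTree → ℕ) (t : LTree) :
    SForm loc t = loc t.children + (t.children.map (SForm loc)).sum := by
  cases t with
  | node a cs => rw [SForm_node]; rfl

theorem SForm_leaf {loc : List LTree → ℕ} (hz : loc [] = 0) {t : LTree}
    (h : t.isLeaf = true) : SForm loc t = 0 := by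
  cases t with
  | node a cs =>
    cases cs with
    | nil => rw [SForm_node, hz]; rfl
    | cons x l => simp [isLeaf_node, List.isEmpty] at h

/-- The master lemma: transfer of a pair of local statistics under `chi`. -/
theorem master (loc1 loc2 : List LTree → ℕ)
    (hz1 : loc1 [] = 0) (hz2 : loc2 [] = 0)
    (hleaf1 : ∀ t : LTree, t.isLeaf = true → loc1 [t] = 0)
    (hleaf2 : ∀ t : LTree, t.isLeaf = true → loc2 [t] = 0)
    (HB : ∀ (c0 : LTree) (P R : List LTree) (b : ℕ) (ℓ : LTree),
        ℓ.isLeaf = true → (∀ x ∈ R, x.isSingletonParent = false) →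
        loc1 (ℓ :: node b (chi (c0 :: P)) :: R.map Phi) + loc2 (c0 :: P)
          = loc2 (c0 :: (P ++ node b [ℓ] :: R)))
    (HA : ∀ (c0 : LTree) (b : ℕ) (es rest' : List LTree),
        c0.isLeaf = true → es ≠ [] →
        (∀ x ∈ (node b es) :: rest', x.isSingletonParent = false) →
        loc1 (chi es ++ node b [c0] :: rest'.map Phi)
          = loc1 (chi es) + loc2 (c0 :: node b es :: rest'))
    (HN : ∀ (c0 : LTree) (rest : List LTree),
        (∀ x ∈ rest, x.isSingletonParent = false) →
        (∀ d ∈ rest.head?, (c0.isLeaf && !d.isLeaf) = false) →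
        loc1 ((c0 :: rest).map Phi) = loc2 (c0 :: rest)) :
    ∀ cs : List LTree,
      loc1 (chi cs) + ((chi cs).map (SForm loc1)).sum
        = loc2 cs + (cs.map (SForm loc2)).sum := by
  suffices h : ∀ n : ℕ, ∀ cs : List LTree, sizeOf cs ≤ n →
      loc1 (chi cs) + ((chi cs).map (SForm loc1)).sum
        = loc2 cs + (cs.map (SForm loc2)).sum from
    fun cs => h (sizeOf cs) cs le_rfl
  intro n
  induction n using Nat.strong_induction_on with
  | _ n ih =>
  intro cs hn
  have hPhi : ∀ x : LTree, sizeOf x ≤ n → SForm loc1 (Phi x) = SForm loc2 x := by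
    intro x hx
    cases x with
    | node a cs' =>
      have h1 : sizeOf cs' < sizeOf (node a cs') := sizeOf_children_lt (node a cs')
      rw [Phi_node, SForm_node, SForm_node]
      exact ih (sizeOf cs') (by omega) cs' le_rfl
  have hmapPhi : ∀ l : List LTree, sizeOf l ≤ n →
      ((l.map Phi).map (SForm loc1)).sum = (l.map (SForm loc2)).sum := by
    intro l hl
    rw [List.map_map]
    apply congrArg
    apply List.map_congr_left
    intro x hx
    have := List.sizeOf_lt_of_mem hx
    exact hPhi x (by omega)
  match cs with
  | [] => simp [chi_nil, hz1, hz2]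
  | c0 :: rest =>
    have hsz : sizeOf (c0 :: rest) = 1 + sizeOf c0 + sizeOf rest := by simp
    have hc0 := sizeOf_tree_pos c0
    have hrest := sizeOf_list_pos rest
    apply chi_cases c0 rest
    · -- B case
      intro P R b ℓ hr1 hl hR hc
      have hszr : sizeOf rest + 1 = sizeOf P + (1 + sizeOf (node b [ℓ]) + sizeOf R) := by
        have h' := sizeOf_append_tree P (node b [ℓ] :: R)
        rw [hr1]
        simp only [List.cons.sizeOf_spec] at h' ⊢
        omega
      have hp2 := sizeOf_tree_pos (node b [ℓ])
      have hP := sizeOf_list_pos P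
      have hr := sizeOf_list_pos R
      have hcP : sizeOf (c0 :: P) = 1 + sizeOf c0 + sizeOf P := by simp
      have hPsz : sizeOf (c0 :: P) < n := by omega
      have hq : SForm loc1 (node b (chi (c0 :: P)))
          = loc2 (c0 :: P) + ((c0 :: P).map (SForm loc2)).sum := by
        rw [SForm_node]
        exact ih (sizeOf (c0 :: P)) (by omega) _ le_rfl
      have hSp : SForm loc2 (node b [ℓ]) = 0 := by
        rw [SForm_node, hleaf2 ℓ hl]
        simp [SForm_leaf hz2 hl]
      rw [hc, hr1]
      simp only [List.map_cons, List.sum_cons, List.map_append, List.sum_append]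
      rw [SForm_leaf hz1 hl, hq, hmapPhi R (by omega), hSp]
      have hHB := HB c0 P R b ℓ hl hR
      have : loc1 (ℓ :: node b (chi (c0 :: P)) :: R.map Phi) + loc2 (c0 :: P)
          = loc2 (c0 :: (P ++ node b [ℓ] :: R)) := hHB
      simp only [List.map_cons, List.sum_cons] at this ⊢
      omega
    · -- A case
      intro b es rest' hr1 hcl hes hsp hc
      have hszr : sizeOf rest = 1 + (1 + b + sizeOf es) + sizeOf rest' := by
        rw [hr1]; simp
      have hessz := sizeOf_list_pos es
      have hies := ih (sizeOf es) (by omega) es le_rfl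
      have hSc0 : SForm loc1 (node b [c0]) = 0 := by
        rw [SForm_node, hleaf1 c0 hcl]
        simp [SForm_leaf hz1 hcl]
      rw [hc, hr1]
      simp only [List.map_cons, List.sum_cons, List.map_append, List.sum_append]
      rw [hSc0, hmapPhi rest' (by omega)]
      have hHA := HA c0 b es rest' hcl hes (hr1 ▸ hsp)
      rw [hHA]
      have hSd : SForm loc2 (node b es) = loc2 es + (es.map (SForm loc2)).sum := SForm_node _ _ _
      rw [SForm_leaf hz2 hcl, hSd]
      omega
    · -- N case
      intro hsp hhd hc
      rw [hc]
      rw [HN c0 rest hsp hhd]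
      have : ((c0 :: rest).map Phi).map (SForm loc1) = (c0 :: rest).map (SForm loc2) := by
        rw [List.map_map]
        apply List.map_congr_left
        intro x hx
        have := List.sizeOf_lt_of_mem hx
        exact hPhi x (by omega)
      rw [this]

end PsiAux5
namespace PsiAux6
open LTree PsiAux PsiAux2 PsiAux3 PsiAux4 PsiAux5

def locSNU : List LTree → ℕ
  | c :: _ => if c.isSingletonParent then 1 else 0
  | [] => 0

def locET : List LTree → ℕ
  | c :: d :: _ => if c.isLeaf && d.isLeaf then 1 else 0
  | _ => 0

def locENT : List LTree → ℕ
  | c :: d :: _ => if c.isLeaf && !d.isLeaf then 1 else 0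
  | _ => 0

def locSY : List LTree → ℕ
  | _ :: d :: _ => if d.isLeaf then 1 else 0
  | _ => 0

def locYI : List LTree → ℕ
  | c :: _ => if !c.isLeaf then 1 else 0
  | [] => 0

def locSU (cs : List LTree) : ℕ := cs.tail.countP isSingletonParent

def locYER (cs : List LTree) : ℕ := (cs.drop 2).countP isLeaf

theorem lf_not_sp {t : LTree} (h : t.isLeaf = true) : t.isSingletonParent = false := by
  cases t with
  | node a cs =>
    cases cs with
    | nil => rfl
    | cons x l => simp [isLeaf_node, List.isEmpty] at h

theorem countSp_zero {l : List LTree} (h : ∀ x ∈ l, x.isSingletonParent = false) :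
    l.countP isSingletonParent = 0 :=
  List.countP_eq_zero.mpr (by intro x hx; simp [h x hx])

theorem chi_eq_singleton {es : List LTree} {x : LTree} (h : chi es = [x]) :
    ∃ e, es = [e] ∧ x = Phi e := by
  match es with
  | [] => rw [chi_nil] at h; cases h
  | [e] =>
    rw [chi_single] at h
    exact ⟨e, rfl, by injection h with h1 _; exact h1.symm⟩
  | a :: b :: l =>
    have := chi_length_two (cs := a :: b :: l) (by simp)
    rw [h] at this
    simp at this

theorem exists_two {l : List LTree} (h : 2 ≤ l.length) :
    ∃ x y w, l = x :: y :: w := by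
  match l with
  | x :: y :: w => exact ⟨x, y, w, rfl⟩

theorem q_not_leaf (b : ℕ) (c0 : LTree) (P : List LTree) :
    (node b (chi (c0 :: P))).isLeaf = false :=
  not_lf_node (chi_ne_nil (by simp))

theorem sp_q_nil (b : ℕ) (c0 : LTree) :
    (node b (chi [c0])).isSingletonParent = c0.isLeaf := by
  rw [chi_single, sp_node_single, isLeaf_Phi]

theorem sp_q_cons (b : ℕ) (c0 c1 : LTree) (P' : List LTree) :
    (node b (chi (c0 :: c1 :: P'))).isSingletonParent = false :=
  not_sp_node (chi_length_two (by simp))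

/- ### The seven statistics transfers -/

theorem chi_locSNU (cs : List LTree) :
    locSNU (chi cs) + ((chi cs).map (SForm locSNU)).sum
      = locSNU cs + (cs.map (SForm locSNU)).sum := by
  apply master locSNU locSNU rfl rfl
    (fun t ht => by simp [locSNU, lf_not_sp ht])
    (fun t ht => by simp [locSNU, lf_not_sp ht]) ?_ ?_ ?_
  · intro c0 P R b ℓ hl hR
    cases P <;> simp [locSNU, lf_not_sp hl]
  · intro c0 b es rest' hcl hes hsp
    obtain ⟨e0, E, hchi⟩ : ∃ e0 E, chi es = e0 :: E := by
      cases hch : chi es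
      · exact absurd hch (chi_ne_nil hes)
      · exact ⟨_, _, rfl⟩
    rw [hchi]
    simp [locSNU, lf_not_sp hcl]
  · intro c0 rest _ _
    simp [locSNU, sp_Phi]

theorem chi_locYI (cs : List LTree) :
    locYI (chi cs) + ((chi cs).map (SForm locYI)).sum
      = locYI cs + (cs.map (SForm locYI)).sum := by
  apply master locYI locYI rfl rfl
    (fun t ht => by simp [locYI, ht])
    (fun t ht => by simp [locYI, ht]) ?_ ?_ ?_
  · intro c0 P R b ℓ hl hR
    cases P <;> simp [locYI, hl]
  · intro c0 b es rest' hcl hes hsp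
    obtain ⟨e0, E, hchi⟩ : ∃ e0 E, chi es = e0 :: E := by
      cases hch : chi es
      · exact absurd hch (chi_ne_nil hes)
      · exact ⟨_, _, rfl⟩
    rw [hchi]
    simp [locYI, hcl]
  · intro c0 rest _ _
    simp [locYI, isLeaf_Phi]

theorem chi_locET (cs : List LTree) :
    locET (chi cs) + ((chi cs).map (SForm locET)).sum
      = locET cs + (cs.map (SForm locET)).sum := by
  apply master locET locET rfl rfl
    (fun t _ => rfl) (fun t _ => rfl) ?_ ?_ ?_
  · intro c0 P R b ℓ hl hR
    cases P with
    | nil => simp [locET, q_not_leaf, not_lf_node]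
    | cons c1 P' => simp [locET, q_not_leaf]
  · intro c0 b es rest' hcl hes hsp
    rcases hch : chi es with _ | ⟨x, _ | ⟨y, w⟩⟩
    · exact absurd hch (chi_ne_nil hes)
    · simp [locET, not_lf_node (l := [c0]) (by simp), not_lf_node hes]
    · simp [locET, not_lf_node hes]
  · intro c0 rest _ _
    cases rest <;> simp [locET, isLeaf_Phi]

theorem chi_locSY (cs : List LTree) :
    locSY (chi cs) + ((chi cs).map (SForm locSY)).sum
      = locSY cs + (cs.map (SForm locSY)).sum := by
  apply master locSY locSY rfl rfl
    (fun t _ => rfl) (fun t _ => rfl) ?_ ?_ ?_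
  · intro c0 P R b ℓ hl hR
    cases P with
    | nil => simp [locSY, q_not_leaf, not_lf_node]
    | cons c1 P' => simp [locSY, q_not_leaf]
  · intro c0 b es rest' hcl hes hsp
    rcases hch : chi es with _ | ⟨x, _ | ⟨y, w⟩⟩
    · exact absurd hch (chi_ne_nil hes)
    · simp [locSY, not_lf_node (l := [c0]) (by simp), not_lf_node hes]
    · simp [locSY, not_lf_node hes]
  · intro c0 rest _ _
    cases rest <;> simp [locSY, isLeaf_Phi]

theorem chi_locYER (cs : List LTree) :
    locYER (chi cs) + ((chi cs).map (SForm locYER)).sum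
      = locYER cs + (cs.map (SForm locYER)).sum := by
  apply master locYER locYER rfl rfl
    (fun t _ => rfl) (fun t _ => rfl) ?_ ?_ ?_
  · intro c0 P R b ℓ hl hR
    cases P with
    | nil =>
      simp [locYER, countP_lf_map_Phi, countP_lf_comp]
    | cons c1 P' =>
      simp [locYER, countP_lf_map_Phi, countP_lf_comp, List.countP_append, List.countP_cons,
        not_lf_node (l := [ℓ]) (by simp)]
      omega
  · intro c0 b es rest' hcl hes hsp
    rcases hch : chi es with _ | ⟨x, _ | ⟨y, w⟩⟩
    · exact absurd hch (chi_ne_nil hes)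
    · simp [locYER, countP_lf_map_Phi, countP_lf_comp]
    · simp [locYER, countP_lf_map_Phi, countP_lf_comp, List.countP_append, List.countP_cons,
        not_lf_node (l := [c0]) (by simp)]
  · intro c0 rest _ _
    cases rest with
    | nil => simp [locYER]
    | cons d rest' =>
      cases rest' <;>
        simp [locYER, ← List.map_drop, countP_lf_map_Phi, countP_lf_comp,
          List.countP_cons, isLeaf_Phi]

theorem chi_locSU_ENT (cs : List LTree) :
    locSU (chi cs) + ((chi cs).map (SForm locSU)).sum
      = locENT cs + (cs.map (SForm locENT)).sum := by
  apply master locSU locENT rfl rfl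
    (fun t _ => rfl) (fun t _ => rfl) ?_ ?_ ?_
  · intro c0 P R b ℓ hl hR
    have hmap : (R.map Phi).countP isSingletonParent = 0 := by
      rw [countP_sp_map_Phi]; exact countSp_zero hR
    cases P with
    | nil =>
      simp [locSU, locENT, List.countP_cons, hmap, sp_q_nil, not_lf_node (l := [ℓ]) (by simp)]
    | cons c1 P' =>
      simp [locSU, locENT, List.countP_cons, hmap, sp_q_cons]
  · intro c0 b es rest' hcl hes hsp
    have hsp' : ∀ x ∈ rest', x.isSingletonParent = false :=
      fun x hx => hsp x (List.mem_cons_of_mem _ hx)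
    have hmap : (rest'.map Phi).countP isSingletonParent = 0 := by
      rw [countP_sp_map_Phi]; exact countSp_zero hsp'
    obtain ⟨e0, E, hchi⟩ : ∃ e0 E, chi es = e0 :: E := by
      cases hch : chi es
      · exact absurd hch (chi_ne_nil hes)
      · exact ⟨_, _, rfl⟩
    rw [hchi]
    simp [locSU, locENT, List.countP_append, List.countP_cons, hmap,
      sp_node_single, hcl, not_lf_node hes]
  · intro c0 rest hsp hhd
    cases rest with
    | nil => simp [locSU, locENT]
    | cons d rest' =>
      have h1 := hhd d (by simp [List.head?])
      have h2 : locENT (c0 :: d :: rest') = 0 := by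
        simp only [locENT]
        rw [if_neg]
        simp only [Bool.and_eq_true, Bool.not_eq_true'] at h1 ⊢
        intro hcon
        rcases Bool.and_eq_false_iff.mp h1 with h | h
        · rw [h] at hcon; simp at hcon
        · simp [Bool.not_eq_true'] at h
          rw [h] at hcon; simp at hcon
      rw [h2]
      have hz := countSp_zero (l := rest') (fun x hx => hsp x (List.mem_cons_of_mem _ hx))
      simp [locSU, List.countP_cons, sp_Phi, hsp d (by simp), countP_sp_comp, hz]

theorem chi_locENT_SU (cs : List LTree) :
    locENT (chi cs) + ((chi cs).map (SForm locENT)).sum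
      = locSU cs + (cs.map (SForm locSU)).sum := by
  apply master locENT locSU rfl rfl
    (fun t _ => rfl) (fun t _ => rfl) ?_ ?_ ?_
  · intro c0 P R b ℓ hl hR
    have hR0 : R.countP isSingletonParent = 0 := countSp_zero hR
    cases P with
    | nil =>
      simp [locENT, locSU, List.countP_cons, hR0, hl, q_not_leaf, sp_node_single]
    | cons c1 P' =>
      simp [locENT, locSU, List.countP_append, List.countP_cons, hR0, hl, q_not_leaf,
        sp_node_single]
      omega
  · intro c0 b es rest' hcl hes hsp
    have hspd : (node b es).isSingletonParent = false := hsp _ (by simp)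
    have hsp' : rest'.countP isSingletonParent = 0 :=
      countSp_zero (fun x hx => hsp x (List.mem_cons_of_mem _ hx))
    rcases hch : chi es with _ | ⟨x, _ | ⟨y, w⟩⟩
    · exact absurd hch (chi_ne_nil hes)
    · obtain ⟨e, rfl, rfl⟩ := chi_eq_singleton hch
      have : e.isLeaf = false := by
        rcases h : e.isLeaf
        · rfl
        · rw [sp_node_single] at hspd; rw [h] at hspd; cases hspd
      simp [locENT, locSU, List.countP_cons, hsp', hspd, isLeaf_Phi, this]
    · simp [locENT, locSU, List.countP_cons, hsp', hspd]
  · intro c0 rest hsp hhd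
    cases rest with
    | nil => simp [locENT, locSU]
    | cons d rest' =>
      have h1 := hhd d (by simp [List.head?])
      have hsp' : rest'.countP isSingletonParent = 0 :=
        countSp_zero (fun x hx => hsp x (List.mem_cons_of_mem _ hx))
      have h2 : locENT ((c0 :: d :: rest').map Phi) = 0 := by
        simp only [List.map_cons, locENT]
        rw [if_neg]
        rw [isLeaf_Phi, isLeaf_Phi]
        intro hcon
        rcases Bool.and_eq_false_iff.mp h1 with h | h
        · rw [h] at hcon; simp at hcon
        · simp [Bool.not_eq_true'] at h
          rw [h] at hcon; simp at hcon
      rw [h2]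
      simp [locSU, List.countP_cons, hsp', hsp d (by simp)]

end PsiAux6
namespace PsiAux7
open LTree PsiAux PsiAux2 PsiAux3 PsiAux4 PsiAux5

/-! ### Labels multiset -/

theorem coe_flatten_map (L : List (List LTree)) (g : LTree → ℕ) :
    ((L.flatten.map g : List ℕ) : Multiset ℕ)
      = (L.map (fun l => ((l.map g : List ℕ) : Multiset ℕ))).sum := by
  induction L with
  | nil => rfl
  | cons l L ih =>
    simp only [List.flatten_cons, List.map_append, List.map_cons, List.sum_cons, ← ih]
    exact_mod_cast rfl

def labels (T : LTree) : Multiset ℕ := (T.subtrees.map label : List ℕ)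

theorem labels_node (a : ℕ) (cs : List LTree) :
    labels (node a cs) = a ::ₘ (cs.map labels).sum := by
  rw [labels, subtrees_node]
  simp only [List.map_cons, label_node]
  rw [← Multiset.cons_coe, coe_flatten_map, List.map_map]
  rfl

theorem chi_labels : ∀ n : ℕ, ∀ cs : List LTree, sizeOf cs ≤ n →
    ((chi cs).map labels).sum = (cs.map labels).sum := by
  intro n
  induction n using Nat.strong_induction_on with
  | _ n ih =>
  intro cs hn
  have hPhi : ∀ x : LTree, sizeOf x ≤ n → labels (Phi x) = labels x := by
    intro x hx
    cases x with
    | node a cs' =>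
      have h1 : sizeOf cs' < sizeOf (node a cs') := sizeOf_children_lt (node a cs')
      rw [Phi_node, labels_node, labels_node, ih (sizeOf cs') (by omega) cs' le_rfl]
  have hmapPhi : ∀ l : List LTree, sizeOf l ≤ n →
      ((l.map Phi).map labels).sum = (l.map labels).sum := by
    intro l hl
    rw [List.map_map]
    apply congrArg
    apply List.map_congr_left
    intro x hx
    have := List.sizeOf_lt_of_mem hx
    exact hPhi x (by omega)
  match cs with
  | [] => rw [chi_nil]
  | c0 :: rest =>
    have hsz : sizeOf (c0 :: rest) = 1 + sizeOf c0 + sizeOf rest := by simp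
    have hc0 := sizeOf_tree_pos c0
    have hrest := sizeOf_list_pos rest
    apply chi_cases c0 rest
    · intro P R b ℓ hr1 hl hR hc
      have hszr : sizeOf rest + 1 = sizeOf P + (1 + sizeOf (node b [ℓ]) + sizeOf R) := by
        have h' := sizeOf_append_tree P (node b [ℓ] :: R)
        rw [hr1]
        simp only [List.cons.sizeOf_spec] at h' ⊢
        omega
      have hp2 := sizeOf_tree_pos (node b [ℓ])
      have hcP : sizeOf (c0 :: P) = 1 + sizeOf c0 + sizeOf P := by simp
      have hP := sizeOf_list_pos P
      have hr := sizeOf_list_pos R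
      rw [hc, hr1]
      simp only [List.map_cons, List.sum_cons, List.map_append, List.sum_append,
        labels_node]
      rw [ih (sizeOf (c0 :: P)) (by omega) (c0 :: P) le_rfl, hmapPhi R (by omega)]
      simp only [List.map_cons, List.sum_cons, labels_node, List.map_nil, List.sum_nil]
      simp only [← Multiset.singleton_add]
      abel
    · intro b es rest' hr1 hcl hes hsp hc
      have hszr : sizeOf rest = 1 + (1 + b + sizeOf es) + sizeOf rest' := by
        rw [hr1]; simp
      have hessz := sizeOf_list_pos es
      rw [hc, hr1]
      simp only [List.map_cons, List.sum_cons, List.map_append, List.sum_append,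
        labels_node]
      rw [ih (sizeOf es) (by omega) es le_rfl, hmapPhi rest' (by omega)]
      simp only [List.map_cons, List.sum_cons, List.map_nil, List.sum_nil]
      simp only [← Multiset.singleton_add]
      abel
    · intro hsp hhd hc
      rw [hc]
      exact hmapPhi (c0 :: rest) (by omega)

theorem labels_Phi (t : LTree) : labels (Phi t) = labels t := by
  cases t with
  | node a cs =>
    rw [Phi_node, labels_node, labels_node, chi_labels (sizeOf cs) cs le_rfl]

/-! ### Well-formedness -/

def Wf (T : LTree) : Prop :=
  ∀ t ∈ T.subtrees, (∀ c ∈ t.children, t.label ≤ c.label) ∧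
    List.Chain' (fun a b => b ≤ a) (t.children.map label)

theorem Wf_node {a : ℕ} {cs : List LTree} :
    Wf (node a cs) ↔
      ((∀ c ∈ cs, a ≤ c.label) ∧ List.Chain' (fun a b => b ≤ a) (cs.map label)
        ∧ ∀ c ∈ cs, Wf c) := by
  constructor
  · intro h
    have h0 := h (node a cs) (by rw [subtrees_node]; exact List.mem_cons_self)
    refine ⟨h0.1, h0.2, ?_⟩
    intro c hcmem t ht
    apply h
    rw [subtrees_node]
    apply List.mem_cons_of_mem
    rw [List.mem_flatten]
    exact ⟨subtrees c, List.mem_map_of_mem hcmem, ht⟩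
  · rintro ⟨h1, h2, h3⟩ t ht
    rw [subtrees_node] at ht
    rcases List.mem_cons.mp ht with rfl | ht
    · exact ⟨h1, h2⟩
    · rw [List.mem_flatten] at ht
      obtain ⟨l, hl, htl⟩ := ht
      obtain ⟨c, hc, rfl⟩ := List.mem_map.mp hl
      exact h3 c hc t htl

/-- Pairwise weakly-decreasing labels. -/
def PW (l : List LTree) : Prop := List.Pairwise (fun x y : LTree => y.label ≤ x.label) l

theorem chain'_iff_PW {l : List LTree} :
    List.Chain' (fun a b => b ≤ a) (l.map label) ↔ PW l := by
  haveI : IsTrans LTree (fun x y : LTree => y.label ≤ x.label) :=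
    ⟨fun a b c h1 h2 => le_trans h2 h1⟩
  show List.IsChain _ _ ↔ _
  rw [List.isChain_map, List.isChain_iff_pairwise]
  rfl

theorem chi_wf : ∀ n : ℕ, ∀ (m : ℕ) (cs : List LTree), sizeOf cs ≤ n →
    (∀ c ∈ cs, m ≤ c.label) → PW cs → (∀ c ∈ cs, Wf c) →
    (∀ c ∈ chi cs, m ≤ c.label) ∧ PW (chi cs) ∧ (∀ c ∈ chi cs, Wf c) := by
  intro n
  induction n using Nat.strong_induction_on with
  | _ n ih =>
  intro m cs hn hlab hpw hwf
  have hPhi : ∀ x : LTree, sizeOf x ≤ n → Wf x → Wf (Phi x) := by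
    intro x hx hw
    cases x with
    | node a cs' =>
      have h1 : sizeOf cs' < sizeOf (node a cs') := sizeOf_children_lt (node a cs')
      rw [Wf_node] at hw
      obtain ⟨hw1, hw2, hw3⟩ := hw
      have := ih (sizeOf cs') (by omega) a cs' le_rfl hw1 (chain'_iff_PW.mp hw2) hw3
      rw [Phi_node, Wf_node]
      exact ⟨this.1, chain'_iff_PW.mpr this.2.1, this.2.2⟩
  have hlabPhi : ∀ x : LTree, (Phi x).label = x.label := label_Phi
  match cs with
  | [] => rw [chi_nil]; exact ⟨by simp, List.Pairwise.nil, by simp⟩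
  | c0 :: rest =>
    have hsz : sizeOf (c0 :: rest) = 1 + sizeOf c0 + sizeOf rest := by simp
    have hc0 := sizeOf_tree_pos c0
    have hrest := sizeOf_list_pos rest
    apply chi_cases c0 rest
    · -- B case
      intro P R b ℓ hr1 hl hR hc
      have hszr : sizeOf rest + 1 = sizeOf P + (1 + sizeOf (node b [ℓ]) + sizeOf R) := by
        have h' := sizeOf_append_tree P (node b [ℓ] :: R)
        rw [hr1]
        simp only [List.cons.sizeOf_spec] at h' ⊢
        omega
      have hp2 := sizeOf_tree_pos (node b [ℓ])
      have hcP : sizeOf (c0 :: P) = 1 + sizeOf c0 + sizeOf P := by simp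
      have hP := sizeOf_list_pos P
      have hr := sizeOf_list_pos R
      subst hr1
      -- facts from pairwise
      rw [PW] at hpw
      rcases List.pairwise_cons.mp hpw with ⟨hc0rel, hpw'⟩
      rcases List.pairwise_append.mp hpw' with ⟨hpwP, hpwpR, hcross⟩
      rcases List.pairwise_cons.mp hpwpR with ⟨hpR, hpwR⟩
      have hb_le_c0 : b ≤ c0.label := hc0rel (node b [ℓ]) (by simp)
      have hwf_p : Wf (node b [ℓ]) := hwf (node b [ℓ]) (by simp)
      have hb_le_l : b ≤ ℓ.label := ((Wf_node.mp hwf_p).1) ℓ (by simp)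
      have hm_le_b : m ≤ b := hlab (node b [ℓ]) (by simp)
      have hPge : ∀ x ∈ c0 :: P, b ≤ x.label := by
        intro x hx
        rcases List.mem_cons.mp hx with rfl | hx
        · exact hb_le_c0
        · exact hcross x hx (node b [ℓ]) (by simp)
      have hPpw : PW (c0 :: P) := by
        rw [PW]
        rw [List.pairwise_cons]
        exact ⟨fun y hy => hc0rel y (List.mem_append_left _ hy), hpwP⟩
      have hPwf : ∀ c ∈ c0 :: P, Wf c := by
        intro c hcmem
        rcases List.mem_cons.mp hcmem with rfl | hcmem
        · exact hwf c (by simp)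
        · exact hwf c (by simp [hcmem])
      have hihP := ih (sizeOf (c0 :: P)) (by omega) b (c0 :: P) le_rfl hPge hPpw hPwf
      have hRge : ∀ x ∈ R, x.label ≤ b := fun x hx => hpR x hx
      have hRwf : ∀ x ∈ R, Wf x := by
        intro x hx
        exact hwf x (by simp [hx])
      have hRm : ∀ x ∈ R, m ≤ x.label := by
        intro x hx
        exact hlab x (by simp [hx])
      rw [hc]
      refine ⟨?_, ?_, ?_⟩
      · intro c hcmem
        rcases List.mem_cons.mp hcmem with rfl | hcmem
        · omega
        rcases List.mem_cons.mp hcmem with rfl | hcmem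
        · exact hm_le_b
        · obtain ⟨r, hrm, rfl⟩ := List.mem_map.mp hcmem
          rw [hlabPhi]
          exact hRm r hrm
      · rw [PW, List.pairwise_cons]
        constructor
        · intro y hy
          rcases List.mem_cons.mp hy with rfl | hy
          · exact hb_le_l
          · obtain ⟨r, hrm, rfl⟩ := List.mem_map.mp hy
            rw [hlabPhi]
            have := hRge r hrm
            omega
        rw [List.pairwise_cons]
        constructor
        · intro y hy
          obtain ⟨r, hrm, rfl⟩ := List.mem_map.mp hy
          rw [hlabPhi, label_node]
          exact hRge r hrm
        · rw [List.pairwise_map]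
          apply List.Pairwise.imp ?_ hpwR
          intro x y hxy
          rw [hlabPhi, hlabPhi]
          exact hxy
      · intro c hcmem
        rcases List.mem_cons.mp hcmem with rfl | hcmem
        · exact (Wf_node.mp hwf_p).2.2 c (by simp)
        rcases List.mem_cons.mp hcmem with rfl | hcmem
        · rw [Wf_node]
          exact ⟨hihP.1, chain'_iff_PW.mpr hihP.2.1, hihP.2.2⟩
        · obtain ⟨r, hrm, rfl⟩ := List.mem_map.mp hcmem
          exact hPhi r (by have := List.sizeOf_lt_of_mem hrm; omega) (hRwf r hrm)
    · -- A case
      intro b es rest' hr1 hcl hes hsp hc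
      subst hr1
      have hszr : sizeOf (node b es :: rest') = 1 + (1 + b + sizeOf es) + sizeOf rest' := by
        simp
      have hessz := sizeOf_list_pos es
      rw [PW] at hpw
      rcases List.pairwise_cons.mp hpw with ⟨hc0rel, hpw'⟩
      rcases List.pairwise_cons.mp hpw' with ⟨hdrel, hpwrest'⟩
      have hb_le_c0 : b ≤ c0.label := hc0rel (node b es) (by simp)
      have hm_le_b : m ≤ b := hlab (node b es) (by simp)
      have hwf_d : Wf (node b es) := hwf (node b es) (by simp)
      rw [Wf_node] at hwf_d
      obtain ⟨hd1, hd2, hd3⟩ := hwf_d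
      have hihE := ih (sizeOf es) (by omega) b es le_rfl hd1 (chain'_iff_PW.mp hd2) hd3
      have hrest'm : ∀ x ∈ rest', m ≤ x.label := fun x hx => hlab x (by simp [hx])
      have hrest'b : ∀ x ∈ rest', x.label ≤ b := fun x hx => hdrel x hx
      rw [hc]
      refine ⟨?_, ?_, ?_⟩
      · intro c hcmem
        rcases List.mem_append.mp hcmem with hcmem | hcmem
        · have := hihE.1 c hcmem; omega
        rcases List.mem_cons.mp hcmem with rfl | hcmem
        · exact hm_le_b
        · obtain ⟨r, hrm, rfl⟩ := List.mem_map.mp hcmem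
          rw [hlabPhi]
          exact hrest'm r hrm
      · rw [PW, List.pairwise_append]
        refine ⟨hihE.2.1, ?_, ?_⟩
        · rw [List.pairwise_cons]
          constructor
          · intro y hy
            obtain ⟨r, hrm, rfl⟩ := List.mem_map.mp hy
            rw [hlabPhi, label_node]
            exact hrest'b r hrm
          · rw [List.pairwise_map]
            apply List.Pairwise.imp ?_ hpwrest'
            intro x y hxy
            rw [hlabPhi, hlabPhi]
            exact hxy
        · intro x hx y hy
          have hxb := hihE.1 x hx
          rcases List.mem_cons.mp hy with rfl | hy
          · exact hxb
          · obtain ⟨r, hrm, rfl⟩ := List.mem_map.mp hy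
            rw [hlabPhi]
            have := hrest'b r hrm
            omega
      · intro c hcmem
        rcases List.mem_append.mp hcmem with hcmem | hcmem
        · exact hihE.2.2 c hcmem
        rcases List.mem_cons.mp hcmem with rfl | hcmem
        · rw [Wf_node]
          refine ⟨by simpa using hb_le_c0, List.isChain_singleton _, ?_⟩
          intro c hc'
          rcases List.mem_cons.mp hc' with rfl | hc'
          · exact hwf c (by simp)
          · simp at hc'
        · obtain ⟨r, hrm, rfl⟩ := List.mem_map.mp hcmem
          have := List.sizeOf_lt_of_mem hrm
          exact hPhi r (by omega) (hwf r (by simp [hrm]))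
    · -- N case
      intro hsp hhd hc
      rw [hc]
      refine ⟨?_, ?_, ?_⟩
      · intro c hcmem
        obtain ⟨r, hrm, rfl⟩ := List.mem_map.mp hcmem
        rw [hlabPhi]
        exact hlab r hrm
      · rw [PW, List.pairwise_map]
        apply List.Pairwise.imp ?_ hpw
        intro x y hxy
        rw [hlabPhi, hlabPhi]
        exact hxy
      · intro c hcmem
        obtain ⟨r, hrm, rfl⟩ := List.mem_map.mp hcmem
        have := List.sizeOf_lt_of_mem hrm
        exact hPhi r (by omega) (hwf r hrm)

theorem Wf_Phi {t : LTree} (h : Wf t) : Wf (Phi t) := by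
  cases t with
  | node a cs =>
    rw [Wf_node] at h
    obtain ⟨h1, h2, h3⟩ := h
    have := chi_wf (sizeOf cs) a cs le_rfl h1 (chain'_iff_PW.mp h2) h3
    rw [Phi_node, Wf_node]
    exact ⟨this.1, chain'_iff_PW.mpr this.2.1, this.2.2⟩

end PsiAux7
namespace PsiFinal
open LTree PsiAux PsiAux2 PsiAux3 PsiAux4 PsiAux5 PsiAux6 PsiAux7

theorem countP_eq_sum (l : List LTree) (p : LTree → Bool) :
    l.countP p = (l.map (fun t => if p t = true then 1 else 0)).sum := by
  induction l with
  | nil => rfl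
  | cons a l ih =>
    rw [List.countP_cons, List.map_cons, List.sum_cons, ih]
    omega

theorem suleaf_eq (t : LTree) : suleaf t = SForm locSU t := rfl

theorem yerleaf_eq (t : LTree) : yerleaf t = SForm locYER t := rfl

theorem snuleaf_eq (t : LTree) :
    snuleaf t = (if t.isSingletonParent then 1 else 0) + SForm locSNU t := by
  have h : (t.subtrees.map (fun g => match g.children with
      | c :: _ => if c.isSingletonParent then 1 else 0
      | [] => 0)).sum = SForm locSNU t := by
    rw [SForm]
    apply congrArg
    apply List.map_congr_left
    intro x _
    rcases hx : x.children with _ | ⟨c, l⟩ <;> simp [locSNU, hx]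
  rw [snuleaf, h]

theorem etleaf_eq (t : LTree) : etleaf t = SForm locET t := by
  rw [etleaf, countP_eq_sum, SForm]
  apply congrArg
  apply List.map_congr_left
  intro x _
  rcases hx : x.children with _ | ⟨c, _ | ⟨d, l⟩⟩ <;> simp [locET, hx]

theorem entleaf_eq (t : LTree) : entleaf t = SForm locENT t := by
  rw [entleaf, countP_eq_sum, SForm]
  apply congrArg
  apply List.map_congr_left
  intro x _
  rcases hx : x.children with _ | ⟨c, _ | ⟨d, l⟩⟩ <;> simp [locENT, hx]

theorem syleaf_eq (t : LTree) : syleaf t = SForm locSY t := by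
  rw [syleaf, countP_eq_sum, SForm]
  apply congrArg
  apply List.map_congr_left
  intro x _
  rcases hx : x.children with _ | ⟨c, _ | ⟨d, l⟩⟩ <;> simp [locSY, hx]

theorem yint_eq (t : LTree) : yint t = SForm locYI t := by
  rw [yint, countP_eq_sum, SForm]
  apply congrArg
  apply List.map_congr_left
  intro x _
  rcases hx : x.children with _ | ⟨c, l⟩ <;> simp [locYI, hx]

theorem suleaf_Phi (t : LTree) : suleaf (Phi t) = entleaf t := by
  cases t with
  | node a cs =>
    rw [suleaf_eq, entleaf_eq, Phi_node, SForm_node, SForm_node]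
    exact chi_locSU_ENT cs

theorem entleaf_Phi (t : LTree) : entleaf (Phi t) = suleaf t := by
  cases t with
  | node a cs =>
    rw [suleaf_eq, entleaf_eq, Phi_node, SForm_node, SForm_node]
    exact chi_locENT_SU cs

theorem etleaf_Phi (t : LTree) : etleaf (Phi t) = etleaf t := by
  cases t with
  | node a cs =>
    rw [etleaf_eq, etleaf_eq, Phi_node, SForm_node, SForm_node]
    exact chi_locET cs

theorem syleaf_Phi (t : LTree) : syleaf (Phi t) = syleaf t := by
  cases t with
  | node a cs =>
    rw [syleaf_eq, syleaf_eq, Phi_node, SForm_node, SForm_node]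
    exact chi_locSY cs

theorem yerleaf_Phi (t : LTree) : yerleaf (Phi t) = yerleaf t := by
  cases t with
  | node a cs =>
    rw [yerleaf_eq, yerleaf_eq, Phi_node, SForm_node, SForm_node]
    exact chi_locYER cs

theorem yint_Phi (t : LTree) : yint (Phi t) = yint t := by
  cases t with
  | node a cs =>
    rw [yint_eq, yint_eq, Phi_node, SForm_node, SForm_node]
    exact chi_locYI cs

theorem snuleaf_Phi (t : LTree) : snuleaf (Phi t) = snuleaf t := by
  cases t with
  | node a cs =>
    rw [snuleaf_eq, snuleaf_eq, sp_Phi, Phi_node, SForm_node, SForm_node]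
    have := chi_locSNU cs
    omega

theorem labels_eq (t : LTree) : LTree.labels t = PsiAux7.labels t := rfl

theorem IsWIT_Phi {M : Multiset ℕ} {t : LTree} (h : IsWIT M t) : IsWIT M (Phi t) := by
  obtain ⟨h1, h2, h3⟩ := h
  refine ⟨?_, ?_, ?_⟩
  · rw [label_Phi]; exact h1
  · rw [labels_eq, labels_Phi, ← labels_eq]; exact h2
  · exact Wf_Phi (t := t) h3

end PsiFinal

/-- **Theorem (the involution `Ψ`).**  For a multiset `M` of positive integers with
`|M| ≥ 2` there is an involution `Ψ` on `𝒯_M` preserving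
`(snuleaf, etleaf, syleaf, yerleaf, yint)` and exchanging `suleaf ↔ entleaf`.
In particular `Ψ` restricts to an involution on `𝒜_M = {T ∈ 𝒯_M : yint T = 0}`. -/
theorem suleaf_entleaf_involution
    (M : Multiset ℕ) (hM : ∀ x ∈ M, 0 < x) (hcard : 2 ≤ Multiset.card M) :
    ∃ Ψ : {T : LTree // LTree.IsWIT M T} → {T : LTree // LTree.IsWIT M T},
      Function.Involutive Ψ ∧
        ∀ T : {T : LTree // LTree.IsWIT M T},
          LTree.snuleaf (Ψ T).1 = LTree.snuleaf T.1 ∧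
          LTree.etleaf (Ψ T).1 = LTree.etleaf T.1 ∧
          LTree.syleaf (Ψ T).1 = LTree.syleaf T.1 ∧
          LTree.yerleaf (Ψ T).1 = LTree.yerleaf T.1 ∧
          LTree.yint (Ψ T).1 = LTree.yint T.1 ∧
          LTree.suleaf (Ψ T).1 = LTree.entleaf T.1 ∧
          LTree.entleaf (Ψ T).1 = LTree.suleaf T.1 := by
  classical
  refine ⟨fun T => ⟨PsiAux2.Phi T.1, PsiFinal.IsWIT_Phi T.2⟩, ?_, ?_⟩
  · intro T
    apply Subtype.ext
    exact PsiAux4.Phi_Phi T.1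
  · intro T
    exact ⟨PsiFinal.snuleaf_Phi _, PsiFinal.etleaf_Phi _, PsiFinal.syleaf_Phi _,
      PsiFinal.yerleaf_Phi _, PsiFinal.yint_Phi _, PsiFinal.suleaf_Phi _,
      PsiFinal.entleaf_Phi _⟩
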